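/- Let P and Q be k×k projection matrices and let Φ ∈ ℂ[z₀, z₁, z₂] be the polynomial Φ(z) = det(z₀I + z₁P + z₂Q). Then Φ has no linear (degree-one) polynomial factor if and only if P and Q are in generic position, i.e., with L = range P and N = range Q, all four subspaces L ∩ N, L ∩ N^⊥, L^⊥ ∩ N, and L^⊥ ∩ N^⊥ are trivial. -/

import Mathlib

open Matrix MvPolynomial


variable {k : ℕ}

lemma Matrix.piLp_equiv_toEuclideanLin_apply (A : Matrix (Fin k) (Fin k) ℂ)
    (x : EuclideanSpace ℂ (Fin k)) :
    WithLp.equiv 2 (Fin k → ℂ) (Matrix.toEuclideanLin A x) = A *ᵥ WithLp.equiv 2 (Fin k → ℂ) x :=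
  rfl

lemma Matrix.toEuclideanLin_apply_piLp_equiv_symm (A : Matrix (Fin k) (Fin k) ℂ) (v : Fin k → ℂ) :
    Matrix.toEuclideanLin A ((WithLp.equiv 2 (Fin k → ℂ)).symm v) =
      (WithLp.equiv 2 (Fin k → ℂ)).symm (A *ᵥ v) :=
  rfl

lemma mem_range_iff (P : Matrix (Fin k) (Fin k) ℂ) (hP' : P * P = P) (v : Fin k → ℂ) :
    (WithLp.equiv 2 (Fin k → ℂ)).symm v ∈ LinearMap.range (Matrix.toEuclideanLin P) ↔
      P.mulVec v = v := by
  constructor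
  · rintro ⟨y, hy⟩
    have : P.mulVec (WithLp.equiv 2 (Fin k → ℂ) y) = v := by
      have := congrArg (WithLp.equiv 2 (Fin k → ℂ)) hy
      simpa [Matrix.piLp_equiv_toEuclideanLin_apply, Matrix.ofLp_toEuclideanLin_apply] using this
    rw [← this, Matrix.mulVec_mulVec, hP']
  · intro h
    exact ⟨(WithLp.equiv 2 (Fin k → ℂ)).symm v, by
      rw [Matrix.toEuclideanLin_apply_piLp_equiv_symm, h]⟩

lemma mem_orth_iff (P : Matrix (Fin k) (Fin k) ℂ) (hP : P.IsHermitian) (hP' : P * P = P)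
    (v : Fin k → ℂ) :
    (WithLp.equiv 2 (Fin k → ℂ)).symm v ∈ (LinearMap.range (Matrix.toEuclideanLin P))ᗮ ↔
      P.mulVec v = 0 := by
  have hs := Matrix.isHermitian_iff_isSymmetric.1 hP
  set T := Matrix.toEuclideanLin P with hT
  set x : EuclideanSpace ℂ (Fin k) := (WithLp.equiv 2 (Fin k → ℂ)).symm v with hx
  have hTx : T x = (WithLp.equiv 2 (Fin k → ℂ)).symm (P.mulVec v) :=
    Matrix.toEuclideanLin_apply_piLp_equiv_symm P v
  rw [Submodule.mem_orthogonal]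
  constructor
  · intro h
    have h1 : inner ℂ (T x) x = (0 : ℂ) := h (T x) ⟨x, rfl⟩
    have h2 : inner ℂ x (T x) = (0 : ℂ) := by
      rw [← inner_conj_symm, h1, map_zero]
    have hTT : T (T x) = T x := by
      rw [hTx, Matrix.toEuclideanLin_apply_piLp_equiv_symm, Matrix.mulVec_mulVec, hP']
    have h3 : inner ℂ (T x) (T x) = (0 : ℂ) := by
      rw [hs x (T x), hTT]; exact h2
    have h4 : T x = 0 := inner_self_eq_zero.mp h3
    have := congrArg (WithLp.equiv 2 (Fin k → ℂ)) (hTx ▸ h4)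
    simpa using this
  · intro h u hu
    obtain ⟨y, rfl⟩ := hu
    rw [hs y x, hTx, h]
    simp

lemma inf_ne_bot_iff (S1 S2 : Submodule ℂ (EuclideanSpace ℂ (Fin k))) :
    S1 ⊓ S2 ≠ ⊥ ↔ ∃ v : Fin k → ℂ, v ≠ 0 ∧
      (WithLp.equiv 2 (Fin k → ℂ)).symm v ∈ S1 ∧
      (WithLp.equiv 2 (Fin k → ℂ)).symm v ∈ S2 := by
  rw [Submodule.ne_bot_iff]
  constructor
  · rintro ⟨x, hx, hx0⟩
    rw [Submodule.mem_inf] at hx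
    refine ⟨WithLp.equiv 2 (Fin k → ℂ) x, ?_, ?_, ?_⟩
    · intro h
      apply hx0
      have := congrArg (WithLp.equiv 2 (Fin k → ℂ)).symm h
      simpa using this
    · simpa using hx.1
    · simpa using hx.2
  · rintro ⟨v, hv, h1, h2⟩
    refine ⟨_, Submodule.mem_inf.mpr ⟨h1, h2⟩, ?_⟩
    intro h
    apply hv
    have := congrArg (WithLp.equiv 2 (Fin k → ℂ)) h
    simpa using this

lemma generic_iff (P Q : Matrix (Fin k) (Fin k) ℂ)
    (hP : P.IsHermitian) (hP' : P * P = P)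
    (hQ : Q.IsHermitian) (hQ' : Q * Q = Q)
    (L N : Submodule ℂ (EuclideanSpace ℂ (Fin k)))
    (hL : L = LinearMap.range (Matrix.toEuclideanLin P))
    (hN : N = LinearMap.range (Matrix.toEuclideanLin Q)) :
    (∃ b c : ℂ, ∃ v : Fin k → ℂ, v ≠ 0 ∧ (b = 0 ∨ b = 1) ∧ (c = 0 ∨ c = 1) ∧
        P *ᵥ v = b • v ∧ Q *ᵥ v = c • v) ↔
      (L ⊓ N ≠ ⊥ ∨ L ⊓ Nᗮ ≠ ⊥ ∨ Lᗮ ⊓ N ≠ ⊥ ∨ Lᗮ ⊓ Nᗮ ≠ ⊥) := by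
  subst hL hN
  constructor
  · rintro ⟨b, c, v, hv, hb, hc, hPv, hQv⟩
    rcases hb with rfl | rfl <;> rcases hc with rfl | rfl <;>
      simp only [one_smul, zero_smul] at hPv hQv
    · exact Or.inr (Or.inr (Or.inr ((inf_ne_bot_iff _ _).mpr
        ⟨v, hv, (mem_orth_iff P hP hP' v).mpr hPv, (mem_orth_iff Q hQ hQ' v).mpr hQv⟩)))
    · exact Or.inr (Or.inr (Or.inl ((inf_ne_bot_iff _ _).mpr
        ⟨v, hv, (mem_orth_iff P hP hP' v).mpr hPv, (mem_range_iff Q hQ' v).mpr hQv⟩)))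
    · exact Or.inr (Or.inl ((inf_ne_bot_iff _ _).mpr
        ⟨v, hv, (mem_range_iff P hP' v).mpr hPv, (mem_orth_iff Q hQ hQ' v).mpr hQv⟩))
    · exact Or.inl ((inf_ne_bot_iff _ _).mpr
        ⟨v, hv, (mem_range_iff P hP' v).mpr hPv, (mem_range_iff Q hQ' v).mpr hQv⟩)
  · rintro (h | h | h | h) <;> obtain ⟨v, hv, h1, h2⟩ := (inf_ne_bot_iff _ _).mp h
    · exact ⟨1, 1, v, hv, Or.inr rfl, Or.inr rfl, by
        simpa using (mem_range_iff P hP' v).mp h1, by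
        simpa using (mem_range_iff Q hQ' v).mp h2⟩
    · exact ⟨1, 0, v, hv, Or.inr rfl, Or.inl rfl, by
        simpa using (mem_range_iff P hP' v).mp h1, by
        simpa using (mem_orth_iff Q hQ hQ' v).mp h2⟩
    · exact ⟨0, 1, v, hv, Or.inl rfl, Or.inr rfl, by
        simpa using (mem_orth_iff P hP hP' v).mp h1, by
        simpa using (mem_range_iff Q hQ' v).mp h2⟩
    · exact ⟨0, 0, v, hv, Or.inl rfl, Or.inl rfl, by
        simpa using (mem_orth_iff P hP hP' v).mp h1, by
        simpa using (mem_orth_iff Q hQ hQ' v).mp h2⟩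

lemma single_ne_aux (i j : Fin 3) (hij : i ≠ j) :
    (Finsupp.single i 1 : Fin 3 →₀ ℕ) ≠ Finsupp.single j 1 := by
  simp [Finsupp.single_eq_single_iff, hij]

lemma single_ne_zero_aux (i : Fin 3) : (Finsupp.single i 1 : Fin 3 →₀ ℕ) ≠ 0 := by
  simp [Finsupp.single_eq_zero]

lemma rep_of_totalDegree_le_one (f : MvPolynomial (Fin 3) ℂ) (hf : f.totalDegree ≤ 1) :
    f = C (coeff 0 f) + C (coeff (Finsupp.single 0 1) f) * X 0 +
        C (coeff (Finsupp.single 1 1) f) * X 1 + C (coeff (Finsupp.single 2 1) f) * X 2 := by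
  have hsupp : ∀ m ∈ f.support, m = 0 ∨ m = Finsupp.single 0 1 ∨ m = Finsupp.single 1 1 ∨
      m = Finsupp.single 2 1 := by
    intro m hm
    have hd : (m.sum fun _ e => e) ≤ 1 := le_trans (le_totalDegree hm) hf
    rw [Finsupp.sum_fintype _ _ (fun _ => rfl), Fin.sum_univ_three] at hd
    have hcases : (m 0 = 0 ∧ m 1 = 0 ∧ m 2 = 0) ∨ (m 0 = 1 ∧ m 1 = 0 ∧ m 2 = 0) ∨
        (m 0 = 0 ∧ m 1 = 1 ∧ m 2 = 0) ∨ (m 0 = 0 ∧ m 1 = 0 ∧ m 2 = 1) := by omega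
    rcases hcases with ⟨h0, h1, h2⟩ | ⟨h0, h1, h2⟩ | ⟨h0, h1, h2⟩ | ⟨h0, h1, h2⟩
    · exact Or.inl (Finsupp.ext fun i => by fin_cases i <;> simpa)
    · exact Or.inr (Or.inl (Finsupp.ext fun i => by
        fin_cases i <;> simp [Finsupp.single_apply] <;> assumption))
    · exact Or.inr (Or.inr (Or.inl (Finsupp.ext fun i => by
        fin_cases i <;> simp [Finsupp.single_apply] <;> assumption)))
    · exact Or.inr (Or.inr (Or.inr (Finsupp.ext fun i => by
        fin_cases i <;> simp [Finsupp.single_apply] <;> assumption)))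
  have n0 : ∀ i : Fin 3, (Finsupp.single i 1 : Fin 3 →₀ ℕ) ≠ 0 := single_ne_zero_aux
  have n01 := single_ne_aux 0 1 (by decide)
  have n02 := single_ne_aux 0 2 (by decide)
  have n12 := single_ne_aux 1 2 (by decide)
  apply MvPolynomial.ext
  intro m
  simp only [coeff_add, coeff_C, coeff_C_mul, coeff_X']
  by_cases h0 : m = 0
  · subst h0
    rw [if_pos rfl, if_neg (n0 0), if_neg (n0 1), if_neg (n0 2)]
    ring
  by_cases hs0 : m = Finsupp.single 0 1
  · subst hs0
    rw [if_neg (Ne.symm (n0 0)), if_pos rfl, if_neg (Ne.symm n01), if_neg (Ne.symm n02)]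
    ring
  by_cases hs1 : m = Finsupp.single 1 1
  · subst hs1
    rw [if_neg (Ne.symm (n0 1)), if_neg n01, if_pos rfl, if_neg (Ne.symm n12)]
    ring
  by_cases hs2 : m = Finsupp.single 2 1
  · subst hs2
    rw [if_neg (Ne.symm (n0 2)), if_neg n02, if_neg n12, if_pos rfl]
    ring
  · rw [if_neg (fun h => h0 h.symm), if_neg (fun h => hs0 h.symm), if_neg (fun h => hs1 h.symm),
      if_neg (fun h => hs2 h.symm)]
    have : m ∉ f.support := by
      intro hm
      rcases hsupp m hm with h | h | h | h <;> [exact h0 h; exact hs0 h; exact hs1 h; exact hs2 h]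
    rw [MvPolynomial.notMem_support_iff] at this
    rw [this]; ring

lemma ell_totalDegree (b c : ℂ) :
    (X 0 + C b * X 1 + C c * X 2 : MvPolynomial (Fin 3) ℂ).totalDegree = 1 := by
  apply le_antisymm
  · apply le_trans (totalDegree_add _ _)
    apply max_le
    · apply le_trans (totalDegree_add _ _)
      apply max_le
      · exact le_of_eq (totalDegree_X 0)
      · exact le_trans (totalDegree_mul _ _) (by simp [totalDegree_C, totalDegree_X])
    · exact le_trans (totalDegree_mul _ _) (by simp [totalDegree_C, totalDegree_X])
  · have hco : coeff (Finsupp.single 0 1) (X 0 + C b * X 1 + C c * X 2 : MvPolynomial (Fin 3) ℂ)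
        = 1 := by
      rw [coeff_add, coeff_add, coeff_X, coeff_C_mul, coeff_C_mul, coeff_X', coeff_X',
        if_neg (show ¬ (Finsupp.single 1 1 : Fin 3 →₀ ℕ) = Finsupp.single 0 1 by
          simp [Finsupp.single_eq_single_iff]),
        if_neg (show ¬ (Finsupp.single 2 1 : Fin 3 →₀ ℕ) = Finsupp.single 0 1 by
          simp [Finsupp.single_eq_single_iff])]
      simp
    have hmem : Finsupp.single 0 1 ∈
        (X 0 + C b * X 1 + C c * X 2 : MvPolynomial (Fin 3) ℂ).support := by
      rw [mem_support_iff, hco]; exact one_ne_zero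
    have := le_totalDegree hmem
    simpa using this

lemma dvd_of_aeval_zero (b c : ℂ) (Φ : MvPolynomial (Fin 3) ℂ)
    (h : aeval ![-(C b * X 0 + C c * X 1), X 0, X 1] Φ = (0 : MvPolynomial (Fin 2) ℂ)) :
    (X 0 + C b * X 1 + C c * X 2 : MvPolynomial (Fin 3) ℂ) ∣ Φ := by
  set r : MvPolynomial (Fin 2) ℂ := -(C b * X 0 + C c * X 1) with hr
  have key : (Polynomial.evalRingHom r).comp
        ((finSuccEquiv ℂ 2) : MvPolynomial (Fin 3) ℂ →+* Polynomial (MvPolynomial (Fin 2) ℂ))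
      = ((aeval ![r, X 0, X 1] : MvPolynomial (Fin 3) ℂ →ₐ[ℂ] MvPolynomial (Fin 2) ℂ) :
          MvPolynomial (Fin 3) ℂ →+* MvPolynomial (Fin 2) ℂ) := by
    apply MvPolynomial.ringHom_ext
    · intro a
      simp [finSuccEquiv_apply, algebraMap_eq]
    · intro i
      refine Fin.cases ?_ (fun j => ?_) i
      · simp [finSuccEquiv_X_zero]
      · simp only [RingHom.comp_apply, RingHom.coe_coe, finSuccEquiv_X_succ,
          Polynomial.coe_evalRingHom, Polynomial.eval_C, aeval_X, Matrix.cons_val_succ]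
        fin_cases j <;> simp
  have h2 : Polynomial.eval r ((finSuccEquiv ℂ 2) Φ) = 0 := by
    have := RingHom.congr_fun key Φ
    simp only [RingHom.comp_apply, Polynomial.coe_evalRingHom] at this
    exact this.trans h
  have h3 : (Polynomial.X - Polynomial.C r) ∣ (finSuccEquiv ℂ 2) Φ :=
    Polynomial.dvd_iff_isRoot.mpr h2
  have hE : (finSuccEquiv ℂ 2) (X 0 + C b * X 1 + C c * X 2 : MvPolynomial (Fin 3) ℂ)
      = Polynomial.X - Polynomial.C r := by
    rw [map_add, map_add, _root_.map_mul, _root_.map_mul, finSuccEquiv_X_zero,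
      show (1 : Fin 3) = Fin.succ 0 from rfl, show (2 : Fin 3) = Fin.succ 1 from rfl,
      finSuccEquiv_X_succ, finSuccEquiv_X_succ, hr]
    have hCb : (finSuccEquiv ℂ 2) (C b) = Polynomial.C (C b) := by
      simp [finSuccEquiv_apply]
    have hCc : (finSuccEquiv ℂ 2) (C c) = Polynomial.C (C c) := by
      simp [finSuccEquiv_apply]
    rw [hCb, hCc]
    push_cast
    rw [map_neg, map_add, _root_.map_mul, _root_.map_mul]
    ring
  rw [← hE] at h3
  have h4 := map_dvd (finSuccEquiv ℂ 2).symm h3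
  simpa using h4

variable {k : ℕ}

lemma detmap {S : Type*} [CommRing S] (P Q : Matrix (Fin k) (Fin k) ℂ)
    (σ : MvPolynomial (Fin 3) ℂ →+* S) :
    σ (Matrix.det ((X 0 : MvPolynomial (Fin 3) ℂ) • (1 : Matrix (Fin k) (Fin k) _) +
        (X 1 : MvPolynomial (Fin 3) ℂ) • P.map C + (X 2 : MvPolynomial (Fin 3) ℂ) • Q.map C))
      = Matrix.det (σ (X 0) • (1 : Matrix (Fin k) (Fin k) S) +
          σ (X 1) • P.map (fun a => σ (C a)) + σ (X 2) • Q.map (fun a => σ (C a))) := by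
  rw [RingHom.map_det]
  congr 1
  ext i j
  by_cases h : i = j <;>
    simp [Matrix.map_apply, Matrix.add_apply, Matrix.smul_apply, Matrix.one_apply, h,
      smul_eq_mul, map_add, _root_.map_mul]

lemma pencil_det_zero (A B : Matrix (Fin k) (Fin k) ℂ) (v : Fin k → ℂ) (hv : v ≠ 0)
    (hA : A *ᵥ v = 0) (hB : B *ᵥ v = 0) :
    Matrix.det ((X 0 : MvPolynomial (Fin 2) ℂ) • A.map (C : ℂ → MvPolynomial (Fin 2) ℂ) +
      (X 1 : MvPolynomial (Fin 2) ℂ) • B.map (C : ℂ → MvPolynomial (Fin 2) ℂ)) = 0 := by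
  rw [← Matrix.exists_mulVec_eq_zero_iff]
  refine ⟨fun i => C (v i), ?_, ?_⟩
  · intro h
    apply hv
    funext i
    have := congrFun h i
    simpa using this
  · rw [Matrix.add_mulVec, Matrix.smul_mulVec, Matrix.smul_mulVec]
    have key : ∀ (A : Matrix (Fin k) (Fin k) ℂ), A *ᵥ v = 0 →
        (A.map (C : ℂ → MvPolynomial (Fin 2) ℂ)) *ᵥ (fun i => C (v i)) = 0 := by
      intro A hA
      funext i
      simp only [Matrix.mulVec, dotProduct, Matrix.map_apply]
      rw [show (fun j => (C (A i j) : MvPolynomial (Fin 2) ℂ) * C (v j)) =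
        fun j => (C (A i j * v j) : MvPolynomial (Fin 2) ℂ) from
        funext fun j => (_root_.map_mul C _ _).symm]
      rw [← map_sum]
      have := congrFun hA i
      simp only [Matrix.mulVec, dotProduct] at this
      rw [this]
      simp
    rw [key A hA, key B hB]
    simp

lemma rearrange (P Q : Matrix (Fin k) (Fin k) ℂ) (b c d : ℂ) :
    (-(C b * X 0 + C c * X 1 + C d) : MvPolynomial (Fin 2) ℂ) •
        (1 : Matrix (Fin k) (Fin k) (MvPolynomial (Fin 2) ℂ)) +
      (X 0 : MvPolynomial (Fin 2) ℂ) • P.map (C : ℂ → MvPolynomial (Fin 2) ℂ) +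
      (X 1 : MvPolynomial (Fin 2) ℂ) • Q.map (C : ℂ → MvPolynomial (Fin 2) ℂ)
    = (X 0 : MvPolynomial (Fin 2) ℂ) • ((P - b • 1).map (C : ℂ → MvPolynomial (Fin 2) ℂ)) +
      (X 1 : MvPolynomial (Fin 2) ℂ) • ((Q - c • 1).map (C : ℂ → MvPolynomial (Fin 2) ℂ)) -
      (C d : MvPolynomial (Fin 2) ℂ) • 1 := by
  ext i j
  by_cases h : i = j
  · simp only [Matrix.add_apply, Matrix.sub_apply, Matrix.smul_apply, Matrix.map_apply,
      Matrix.one_apply, if_pos h, smul_eq_mul, map_sub, _root_.map_mul, map_add,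
      _root_.map_one, map_zero, mul_one, mul_zero, sub_zero, add_zero, neg_add_rev]
    ring
  · simp only [Matrix.add_apply, Matrix.sub_apply, Matrix.smul_apply, Matrix.map_apply,
      Matrix.one_apply, if_neg h, smul_eq_mul, map_sub, _root_.map_mul, map_add,
      _root_.map_one, map_zero, mul_one, mul_zero, sub_zero, add_zero, neg_add_rev]
    ring

lemma eval_pencil (A B : Matrix (Fin k) (Fin k) ℂ) (d s t : ℂ)
    (h : Matrix.det ((X 0 : MvPolynomial (Fin 2) ℂ) • A.map (C : ℂ → MvPolynomial (Fin 2) ℂ) +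
      (X 1 : MvPolynomial (Fin 2) ℂ) • B.map (C : ℂ → MvPolynomial (Fin 2) ℂ) -
      (C d : MvPolynomial (Fin 2) ℂ) • 1) = 0) :
    Matrix.det (s • A + t • B - d • (1 : Matrix (Fin k) (Fin k) ℂ)) = 0 := by
  have h2 := congrArg (eval ![s, t]) h
  rw [RingHom.map_det] at h2
  rw [map_zero, RingHom.mapMatrix_apply] at h2
  have hm : (((X 0 : MvPolynomial (Fin 2) ℂ) • A.map (C : ℂ → MvPolynomial (Fin 2) ℂ) +
      (X 1 : MvPolynomial (Fin 2) ℂ) • B.map (C : ℂ → MvPolynomial (Fin 2) ℂ) -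
      (C d : MvPolynomial (Fin 2) ℂ) • 1) :
      Matrix (Fin k) (Fin k) (MvPolynomial (Fin 2) ℂ)).map
      (eval ![s, t]) = s • A + t • B - d • (1 : Matrix (Fin k) (Fin k) ℂ) := by
    ext i j
    by_cases hij : i = j <;>
      simp [Matrix.add_apply, Matrix.sub_apply, Matrix.smul_apply, Matrix.map_apply,
        Matrix.one_apply, hij, smul_eq_mul]
  rw [hm] at h2
  exact h2

lemma proj_eig (P : Matrix (Fin k) (Fin k) ℂ) (hP' : P * P = P) (b : ℂ)
    (h : (P - b • 1).det = 0) : b = 0 ∨ b = 1 := by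
  obtain ⟨v, hv, hPv⟩ := Matrix.exists_mulVec_eq_zero_iff.mpr h
  have hPb : P *ᵥ v = b • v := by
    rw [Matrix.sub_mulVec, Matrix.smul_mulVec, Matrix.one_mulVec] at hPv
    have := sub_eq_zero.mp hPv
    exact this
  have h2 : (b * b) • v = b • v := by
    have e1 : P *ᵥ (P *ᵥ v) = b • v := by rw [Matrix.mulVec_mulVec, hP', hPb]
    have e2 : P *ᵥ (P *ᵥ v) = (b * b) • v := by
      rw [hPb, Matrix.mulVec_smul, hPb, smul_smul]
    rw [← e1, e2]
  obtain ⟨i, hi⟩ : ∃ i, v i ≠ 0 := by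
    by_contra hc
    push_neg at hc
    exact hv (funext hc)
  have h3 : (b * b) * v i = b * v i := congrFun h2 i
  have h4 : b * (b - 1) = 0 := by
    have : (b * b - b) * v i = 0 := by ring_nf; linear_combination h3
    rcases mul_eq_zero.mp this with h | h
    · linear_combination h
    · exact absurd h hi
  rcases mul_eq_zero.mp h4 with h | h
  · exact Or.inl h
  · exact Or.inr (by linear_combination h)

lemma proj_quad (A : Matrix (Fin k) (Fin k) ℂ) (hA : A.IsHermitian) (hA' : A * A = A)
    (v : Fin k → ℂ) :
    star v ⬝ᵥ (A *ᵥ v) = ((∑ i, Complex.normSq ((A *ᵥ v) i) : ℝ) : ℂ) := by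
  conv_lhs => rw [← hA', ← Matrix.mulVec_mulVec, Matrix.dotProduct_mulVec]
  have : star v ᵥ* A = star (A *ᵥ v) := by
    rw [Matrix.star_mulVec, hA.eq]
  rw [this]
  simp only [dotProduct, Pi.star_apply, RCLike.star_def]
  rw [Complex.ofReal_sum]
  congr 1
  funext i
  rw [mul_comm, Complex.mul_conj]

lemma proj_add_kernel (A B : Matrix (Fin k) (Fin k) ℂ)
    (hA : A.IsHermitian) (hA' : A * A = A) (hB : B.IsHermitian) (hB' : B * B = B)
    (v : Fin k → ℂ) (h : (A + B) *ᵥ v = 0) : A *ᵥ v = 0 ∧ B *ᵥ v = 0 := by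
  have hsum : star v ⬝ᵥ (A *ᵥ v) + star v ⬝ᵥ (B *ᵥ v) = 0 := by
    rw [← dotProduct_add, ← Matrix.add_mulVec, h, dotProduct_zero]
  rw [proj_quad A hA hA' v, proj_quad B hB hB' v, ← Complex.ofReal_add,
    Complex.ofReal_eq_zero] at hsum
  have ha : (0:ℝ) ≤ ∑ i, Complex.normSq ((A *ᵥ v) i) :=
    Finset.sum_nonneg fun i _ => Complex.normSq_nonneg _
  have hb : (0:ℝ) ≤ ∑ i, Complex.normSq ((B *ᵥ v) i) :=
    Finset.sum_nonneg fun i _ => Complex.normSq_nonneg _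
  have ha0 : ∑ i, Complex.normSq ((A *ᵥ v) i) = 0 := by linarith
  have hb0 : ∑ i, Complex.normSq ((B *ᵥ v) i) = 0 := by linarith
  constructor
  · funext i
    have := (Finset.sum_eq_zero_iff_of_nonneg (fun i _ => Complex.normSq_nonneg _)).mp ha0 i
      (Finset.mem_univ i)
    exact Complex.normSq_eq_zero.mp this
  · funext i
    have := (Finset.sum_eq_zero_iff_of_nonneg (fun i _ => Complex.normSq_nonneg _)).mp hb0 i
      (Finset.mem_univ i)
    exact Complex.normSq_eq_zero.mp this

lemma key (P Q : Matrix (Fin k) (Fin k) ℂ)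
    (hP : P.IsHermitian) (hP' : P * P = P)
    (hQ : Q.IsHermitian) (hQ' : Q * Q = Q)
    (Φ : MvPolynomial (Fin 3) ℂ)
    (hΦ : Φ = Matrix.det
        ((MvPolynomial.X 0 : MvPolynomial (Fin 3) ℂ) •
            (1 : Matrix (Fin k) (Fin k) (MvPolynomial (Fin 3) ℂ)) +
          (MvPolynomial.X 1 : MvPolynomial (Fin 3) ℂ) • P.map MvPolynomial.C +
          (MvPolynomial.X 2 : MvPolynomial (Fin 3) ℂ) • Q.map MvPolynomial.C)) :
    (∃ f g : MvPolynomial (Fin 3) ℂ, f.totalDegree = 1 ∧ Φ = f * g) ↔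
      (∃ b c : ℂ, ∃ v : Fin k → ℂ, v ≠ 0 ∧ (b = 0 ∨ b = 1) ∧ (c = 0 ∨ c = 1) ∧
        P *ᵥ v = b • v ∧ Q *ᵥ v = c • v) := by
  constructor
  · rintro ⟨f, g, hf1, hfg⟩
    have hrep := rep_of_totalDegree_le_one f (le_of_eq hf1)
    set c0 := coeff 0 f with hc0d
    set a0 := coeff (Finsupp.single 0 1) f with ha0d
    set a1 := coeff (Finsupp.single 1 1) f with ha1d
    set a2 := coeff (Finsupp.single 2 1) f with ha2d
    by_cases ha0 : a0 = 0
    · exfalso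
      have hne : ¬(a1 = 0 ∧ a2 = 0) := by
        rintro ⟨h1, h2⟩
        rw [ha0, h1, h2] at hrep
        simp only [map_zero, zero_mul, add_zero] at hrep
        rw [hrep, totalDegree_C] at hf1
        exact zero_ne_one hf1
      obtain ⟨w1, w2, hw⟩ : ∃ w1 w2 : ℂ, a1 * w1 + a2 * w2 + c0 = 0 := by
        by_cases h1 : a1 = 0
        · have h2 : a2 ≠ 0 := fun h => hne ⟨h1, h⟩
          exact ⟨0, -c0 / a2, by field_simp [h1]; ring⟩
        · exact ⟨-c0 / a1, 0, by field_simp; ring⟩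
      set ev : MvPolynomial (Fin 3) ℂ →ₐ[ℂ] Polynomial ℂ :=
        aeval ![Polynomial.X, Polynomial.C w1, Polynomial.C w2] with hevd
      have hevf : ev f = 0 := by
        rw [hrep]
        simp only [map_add, _root_.map_mul, hevd, aeval_X, aeval_C,
          Matrix.cons_val_zero, Matrix.cons_val_one, Matrix.head_cons]
        have hwc : Polynomial.C a1 * Polynomial.C w1 + Polynomial.C a2 * Polynomial.C w2
            + Polynomial.C c0 = 0 := by
          rw [← Polynomial.C_mul, ← Polynomial.C_mul, ← Polynomial.C_add, ← Polynomial.C_add, hw,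
            Polynomial.C_0]
        have ha0' : Polynomial.C a0 = 0 := by rw [ha0, Polynomial.C_0]
        have hX2 : (![Polynomial.X, Polynomial.C w1, Polynomial.C w2] : Fin 3 → Polynomial ℂ) 2
            = Polynomial.C w2 := rfl
        rw [hX2]
        rw [show (algebraMap ℂ (Polynomial ℂ)) = Polynomial.C from rfl]
        linear_combination hwc + Polynomial.X * ha0'
      have hevΦ : ev Φ = 0 := by rw [hfg, _root_.map_mul, hevf, zero_mul]
      have hd := detmap P Q (ev : MvPolynomial (Fin 3) ℂ →+* Polynomial ℂ)
      rw [show (ev : MvPolynomial (Fin 3) ℂ →+* Polynomial ℂ) (X 0) = Polynomial.X by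
        simp [hevd]] at hd
      rw [show (ev : MvPolynomial (Fin 3) ℂ →+* Polynomial ℂ) (X 1) = Polynomial.C w1 by
        simp [hevd]] at hd
      rw [show (ev : MvPolynomial (Fin 3) ℂ →+* Polynomial ℂ) (X 2) = Polynomial.C w2 by
        simp [hevd]] at hd
      rw [show (fun a => (ev : MvPolynomial (Fin 3) ℂ →+* Polynomial ℂ) (C a)) = Polynomial.C from
        funext fun a => by simp [hevd]] at hd
      have hch : (Polynomial.X : Polynomial ℂ) • (1 : Matrix (Fin k) (Fin k) (Polynomial ℂ)) +
          Polynomial.C w1 • P.map Polynomial.C + Polynomial.C w2 • Q.map Polynomial.C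
          = Matrix.charmatrix (-(w1 • P + w2 • Q)) := by
        ext i j
        by_cases hij : i = j
        · subst hij
          rw [Matrix.charmatrix_apply_eq]
          simp only [Matrix.add_apply, Matrix.smul_apply, Matrix.map_apply, Matrix.one_apply_eq,
            smul_eq_mul, mul_one]
          rw [show (-(w1 • P + w2 • Q)) i i = -(w1 * P i i + w2 * Q i i) by simp]
          rw [map_neg, map_add, Polynomial.C_mul, Polynomial.C_mul]
          ring
        · rw [Matrix.charmatrix_apply_ne _ _ _ hij]
          simp only [Matrix.add_apply, Matrix.smul_apply, Matrix.map_apply,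
            Matrix.one_apply_ne hij, smul_eq_mul, mul_zero, zero_add]
          rw [show (-(w1 • P + w2 • Q)) i j = -(w1 * P i j + w2 * Q i j) by simp]
          rw [map_neg, map_add, Polynomial.C_mul, Polynomial.C_mul]
          ring
      rw [hch] at hd
      have hfin : (-(w1 • P + w2 • Q)).charpoly = 0 := by
        have hrfl : (-(w1 • P + w2 • Q)).charpoly = (-(w1 • P + w2 • Q)).charmatrix.det := rfl
        rw [hrfl, ← hd]
        rw [hΦ] at hevΦ
        exact hevΦ
      exact (Matrix.charpoly_monic _).ne_zero hfin
    · set b := a1 / a0 with hbdef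
      set c := a2 / a0 with hcdef
      set d := c0 / a0 with hddef
      set sg : MvPolynomial (Fin 3) ℂ →ₐ[ℂ] MvPolynomial (Fin 2) ℂ :=
        aeval ![-(C b * X 0 + C c * X 1 + C d), (X 0 : MvPolynomial (Fin 2) ℂ), X 1] with hsgd
      have hsgf : sg f = 0 := by
        rw [hrep]
        simp only [map_add, _root_.map_mul, hsgd, aeval_X, aeval_C,
          Matrix.cons_val_zero, Matrix.cons_val_one, Matrix.head_cons]
        have hX2 : (![-(C b * X 0 + C c * X 1 + C d), (X 0 : MvPolynomial (Fin 2) ℂ), X 1]) 2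
            = (X 1 : MvPolynomial (Fin 2) ℂ) := rfl
        rw [hX2]
        rw [show (algebraMap ℂ (MvPolynomial (Fin 2) ℂ)) = C from rfl]
        have e1 : (C a0 : MvPolynomial (Fin 2) ℂ) * C b = C a1 := by
          rw [← _root_.map_mul]
          congr 1
          rw [hbdef]
          field_simp
        have e2 : (C a0 : MvPolynomial (Fin 2) ℂ) * C c = C a2 := by
          rw [← _root_.map_mul]
          congr 1
          rw [hcdef]
          field_simp
        have e3 : (C a0 : MvPolynomial (Fin 2) ℂ) * C d = C c0 := by
          rw [← _root_.map_mul]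
          congr 1
          rw [hddef]
          field_simp
        linear_combination -((X 0 : MvPolynomial (Fin 2) ℂ) * e1) -
          (X 1 : MvPolynomial (Fin 2) ℂ) * e2 - e3
      have hsgΦ : sg Φ = 0 := by rw [hfg, _root_.map_mul, hsgf, zero_mul]
      have hdet : Matrix.det ((X 0 : MvPolynomial (Fin 2) ℂ) •
          ((P - b • 1).map (C : ℂ → MvPolynomial (Fin 2) ℂ)) +
          (X 1 : MvPolynomial (Fin 2) ℂ) • ((Q - c • 1).map (C : ℂ → MvPolynomial (Fin 2) ℂ)) -
          (C d : MvPolynomial (Fin 2) ℂ) • 1) = 0 := by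
        have hd := detmap P Q (sg : MvPolynomial (Fin 3) ℂ →+* MvPolynomial (Fin 2) ℂ)
        rw [show (sg : MvPolynomial (Fin 3) ℂ →+* MvPolynomial (Fin 2) ℂ) (X 0)
            = -(C b * X 0 + C c * X 1 + C d) by simp [hsgd]] at hd
        rw [show (sg : MvPolynomial (Fin 3) ℂ →+* MvPolynomial (Fin 2) ℂ) (X 1)
            = (X 0 : MvPolynomial (Fin 2) ℂ) by simp [hsgd]] at hd
        rw [show (sg : MvPolynomial (Fin 3) ℂ →+* MvPolynomial (Fin 2) ℂ) (X 2)
            = (X 1 : MvPolynomial (Fin 2) ℂ) by simp [hsgd]] at hd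
        rw [show (fun a => (sg : MvPolynomial (Fin 3) ℂ →+* MvPolynomial (Fin 2) ℂ) (C a))
            = (C : ℂ → MvPolynomial (Fin 2) ℂ) from funext fun a => by
              simp [hsgd, algebraMap_eq]] at hd
        rw [rearrange P Q b c d] at hd
        rw [← hd, ← hΦ]
        exact hsgΦ
      have hev : ∀ s t : ℂ, Matrix.det (s • (P - b • 1) + t • (Q - c • 1) -
          d • (1 : Matrix (Fin k) (Fin k) ℂ)) = 0 :=
        fun s t => eval_pencil (P - b • 1) (Q - c • 1) d s t hdet
      rcases Nat.eq_zero_or_pos k with hk | hk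
      · exfalso
        have h00 := hev 0 0
        subst hk
        rw [Matrix.det_fin_zero] at h00
        exact one_ne_zero h00
      · have hk' : k ≠ 0 := hk.ne'
        have hd0 : d = 0 := by
          have h00 := hev 0 0
          rw [zero_smul, zero_smul, zero_add, zero_sub, ← neg_smul, Matrix.det_smul,
            Matrix.det_one, mul_one, Fintype.card_fin] at h00
          simpa using pow_eq_zero_iff hk' |>.mp h00
        have hbd : b = 0 ∨ b = 1 := by
          apply proj_eig P hP' b
          have h10 := hev 1 0
          rw [hd0] at h10
          simpa using h10
        have hcd : c = 0 ∨ c = 1 := by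
          apply proj_eig Q hQ' c
          have h01 := hev 0 1
          rw [hd0] at h01
          simpa using h01
        have hb2 : b * b = b := by rcases hbd with h | h <;> rw [h] <;> ring
        have hc2 : c * c = c := by rcases hcd with h | h <;> rw [h] <;> ring
        set P1 : Matrix (Fin k) (Fin k) ℂ := (1 - 2*b) • P + b • 1 with hP1d
        set Q1 : Matrix (Fin k) (Fin k) ℂ := (1 - 2*c) • Q + c • 1 with hQ1d
        have hP1e : (1 - 2*b) • (P - b • 1) = P1 := by
          rw [hP1d]
          match_scalars
          · ring
          · linear_combination 2 * hb2
        have hQ1e : (1 - 2*c) • (Q - c • 1) = Q1 := by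
          rw [hQ1d]
          match_scalars
          · ring
          · linear_combination 2 * hc2
        have hdet2 : (P1 + Q1).det = 0 := by
          have h := hev (1 - 2*b) (1 - 2*c)
          rw [hd0, zero_smul, sub_zero, hP1e, hQ1e] at h
          exact h
        obtain ⟨v, hv, hker⟩ := Matrix.exists_mulVec_eq_zero_iff.mpr hdet2
        have hsb : (starRingEnd ℂ) b = b := by rcases hbd with h | h <;> rw [h] <;> simp
        have hsc : (starRingEnd ℂ) c = c := by rcases hcd with h | h <;> rw [h] <;> simp
        have hsb1 : star (1 - 2*b) = 1 - 2*b := by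
          rcases hbd with h | h <;> rw [h] <;> simp <;> norm_num
        have hsc1 : star (1 - 2*c) = 1 - 2*c := by
          rcases hcd with h | h <;> rw [h] <;> simp <;> norm_num
        have hsb0 : star b = b := hsb
        have hsc0 : star c = c := hsc
        have hP1H : P1.IsHermitian := by
          show P1ᴴ = P1
          rw [hP1d, Matrix.conjTranspose_add, Matrix.conjTranspose_smul,
            Matrix.conjTranspose_smul, Matrix.conjTranspose_one, hP.eq, hsb1, hsb0]
        have hQ1H : Q1.IsHermitian := by
          show Q1ᴴ = Q1
          rw [hQ1d, Matrix.conjTranspose_add, Matrix.conjTranspose_smul,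
            Matrix.conjTranspose_smul, Matrix.conjTranspose_one, hQ.eq, hsc1, hsc0]
        have hP1p : P1 * P1 = P1 := by
          rw [hP1d]
          simp only [add_mul, mul_add, smul_mul_assoc, mul_smul_comm, smul_smul, hP',
            one_mul, mul_one]
          match_scalars
          · ring
          · linear_combination hb2
        have hQ1p : Q1 * Q1 = Q1 := by
          rw [hQ1d]
          simp only [add_mul, mul_add, smul_mul_assoc, mul_smul_comm, smul_smul, hQ',
            one_mul, mul_one]
          match_scalars
          · ring
          · linear_combination hc2
        obtain ⟨hPk, hQk⟩ := proj_add_kernel P1 Q1 hP1H hP1p hQ1H hQ1p v hker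
        refine ⟨b, c, v, hv, hbd, hcd, ?_, ?_⟩
        · rcases hbd with h | h
          · have hP1P : P1 = P := by rw [hP1d, h]; simp
            rw [hP1P] at hPk
            rw [hPk, h, zero_smul]
          · have hP1P : P1 = 1 - P := by rw [hP1d, h]; match_scalars <;> ring
            rw [hP1P, Matrix.sub_mulVec, Matrix.one_mulVec] at hPk
            have := sub_eq_zero.mp hPk
            rw [← this, h, one_smul]
        · rcases hcd with h | h
          · have hQ1Q : Q1 = Q := by rw [hQ1d, h]; simp
            rw [hQ1Q] at hQk
            rw [hQk, h, zero_smul]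
          · have hQ1Q : Q1 = 1 - Q := by rw [hQ1d, h]; match_scalars <;> ring
            rw [hQ1Q, Matrix.sub_mulVec, Matrix.one_mulVec] at hQk
            have := sub_eq_zero.mp hQk
            rw [← this, h, one_smul]

  · rintro ⟨b, c, v, hv, hb, hc, hPv, hQv⟩
    have hAv : (P - b • 1) *ᵥ v = 0 := by
      rw [Matrix.sub_mulVec, Matrix.smul_mulVec, Matrix.one_mulVec, hPv, sub_self]
    have hBv : (Q - c • 1) *ᵥ v = 0 := by
      rw [Matrix.sub_mulVec, Matrix.smul_mulVec, Matrix.one_mulVec, hQv, sub_self]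
    have hdet0 := pencil_det_zero (P - b • 1) (Q - c • 1) v hv hAv hBv
    have hsub : aeval ![-(C b * X 0 + C c * X 1), (X 0 : MvPolynomial (Fin 2) ℂ), X 1] Φ
        = (0 : MvPolynomial (Fin 2) ℂ) := by
      set sg : MvPolynomial (Fin 3) ℂ →ₐ[ℂ] MvPolynomial (Fin 2) ℂ :=
        aeval ![-(C b * X 0 + C c * X 1), (X 0 : MvPolynomial (Fin 2) ℂ), X 1] with hsg
      rw [hΦ]
      have hd := detmap P Q (sg : MvPolynomial (Fin 3) ℂ →+* MvPolynomial (Fin 2) ℂ)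
      rw [show (sg : MvPolynomial (Fin 3) ℂ →+* MvPolynomial (Fin 2) ℂ) (X 0)
          = -(C b * X 0 + C c * X 1) by simp [hsg]] at hd
      rw [show (sg : MvPolynomial (Fin 3) ℂ →+* MvPolynomial (Fin 2) ℂ) (X 1)
          = (X 0 : MvPolynomial (Fin 2) ℂ) by simp [hsg]] at hd
      rw [show (sg : MvPolynomial (Fin 3) ℂ →+* MvPolynomial (Fin 2) ℂ) (X 2)
          = (X 1 : MvPolynomial (Fin 2) ℂ) by simp [hsg]] at hd
      rw [show (fun a => (sg : MvPolynomial (Fin 3) ℂ →+* MvPolynomial (Fin 2) ℂ) (C a))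
          = (C : ℂ → MvPolynomial (Fin 2) ℂ) from funext fun a => by
            simp [hsg, algebraMap_eq]] at hd
      rw [show (-(C b * X 0 + C c * X 1) : MvPolynomial (Fin 2) ℂ)
          = -(C b * X 0 + C c * X 1 + C (0:ℂ)) by simp, rearrange P Q b c 0,
        show ((C (0:ℂ) : MvPolynomial (Fin 2) ℂ) • (1 : Matrix (Fin k) (Fin k) _)) = 0 by simp,
        sub_zero] at hd
      exact hd.trans hdet0
    obtain ⟨g, hg⟩ := dvd_of_aeval_zero b c Φ hsub
    exact ⟨_, g, ell_totalDegree b c, hg⟩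

set_option maxHeartbeats 1000000 in
/-- Φ(z) = det(z₀I + z₁P + z₂Q) has no degree-one polynomial factor if and only if
the projections P and Q are in generic position. -/
theorem stmt_13 {k : ℕ} (P Q : Matrix (Fin k) (Fin k) ℂ)
    (hP : P.IsHermitian) (hP' : P * P = P)
    (hQ : Q.IsHermitian) (hQ' : Q * Q = Q)
    (L N : Submodule ℂ (EuclideanSpace ℂ (Fin k)))
    (hL : L = LinearMap.range (Matrix.toEuclideanLin P))
    (hN : N = LinearMap.range (Matrix.toEuclideanLin Q))
    (Φ : MvPolynomial (Fin 3) ℂ)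
    (hΦ : Φ = Matrix.det
        ((MvPolynomial.X 0 : MvPolynomial (Fin 3) ℂ) •
            (1 : Matrix (Fin k) (Fin k) (MvPolynomial (Fin 3) ℂ)) +
          (MvPolynomial.X 1 : MvPolynomial (Fin 3) ℂ) • P.map MvPolynomial.C +
          (MvPolynomial.X 2 : MvPolynomial (Fin 3) ℂ) • Q.map MvPolynomial.C)) :
    (¬ ∃ f g : MvPolynomial (Fin 3) ℂ, f.totalDegree = 1 ∧ Φ = f * g) ↔
      (L ⊓ N = ⊥ ∧ L ⊓ Nᗮ = ⊥ ∧ Lᗮ ⊓ N = ⊥ ∧ Lᗮ ⊓ Nᗮ = ⊥) := by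
  have h1 := key P Q hP hP' hQ hQ' Φ hΦ
  have h2 := generic_iff P Q hP hP' hQ hQ' L N hL hN
  rw [h1, h2]
  push_neg
  tauto
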